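/- Any two distinct octads of the extended binary Golay code intersect in exactly 0, 2, or 4 coordinates. -/
import Mathlib


/-- The indicator vector in `𝔽₂²⁴` of a set of labels in `{1,…,24}`
(coordinate `i : Fin 24` carries the label `i+1`). -/
def indic (s : Finset ℕ) : Fin 24 → ZMod 2 := fun i => if (i : ℕ) + 1 ∈ s then 1 else 0

/-- An explicit basis of the extended binary Golay code, given by the support sets
of nine octads and three dodecads. -/
def golayBasisSets : Fin 12 → Finset ℕ :=
  ![{1,2,16,18,5,12,22,3}, {7,4,19,10,12,15,8,16}, {23,3,9,19,13,18,8,11},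
    {6,3,22,4,21,17,15,9}, {20,10,11,17,14,13,22,12}, {24,2,10,19,9,5,14,21},
    {8,7,15,17,11,23,18,16}, {16,1,2,21,4,7,8,18}, {18,1,16,8,23,13,14,5},
    {8,7,15,9,19,23,4,22,13,18,1,16}, {18,23,13,22,3,1,11,10,2,16,7,8},
    {16,1,2,10,12,7,5,9,15,8,23,18}]

/-- The extended binary Golay code `𝒢₂₄ ⊂ 𝔽₂²⁴`. -/
def golayCode : Submodule (ZMod 2) (Fin 24 → ZMod 2) :=
  Submodule.span (ZMod 2) (Set.range fun i => indic (golayBasisSets i))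

/-- The weight of a vector in `𝔽₂²⁴`: the number of nonzero coordinates. -/
def weight (v : Fin 24 → ZMod 2) : ℕ := (Finset.univ.filter fun i => v i ≠ 0).card

/- ### Auxiliary machinery: bitmask representation with accelerated Nat arithmetic -/

def masks : Fin 12 → ℕ :=
  ![2263063, 314056, 4593028, 3227948, 2702848, 9708306, 4441280, 1212619,
    4370577, 6738377, 6461127, 4377555]

def masksL : List ℕ :=
  [2263063, 314056, 4593028, 3227948, 2702848, 9708306, 4441280, 1212619,
    4370577, 6738377, 6461127, 4377555]

lemma masksL_eq : (List.finRange 12).map masks = masksL := by decide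

/-- vector in 𝔽₂²⁴ from bitmask. -/
def bitv (m : ℕ) : Fin 24 → ZMod 2 := fun j => if m.testBit (j : ℕ) then 1 else 0

lemma indic_eq_bitv : ∀ i, indic (golayBasisSets i) = bitv (masks i) := by
  intro i
  funext j
  revert i j
  decide

lemma bitv_zero : bitv 0 = 0 := by
  funext j; simp [bitv]

lemma bitv_xor (a b : ℕ) : bitv a + bitv b = bitv (a ^^^ b) := by
  funext j
  simp only [bitv, Pi.add_apply, Nat.testBit_xor]
  cases h1 : a.testBit (j : ℕ) <;> cases h2 : b.testBit (j : ℕ) <;> simp <;> decide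

/-- xor-combination of a list of masks according to the binary digits of `n`. -/
def comb : List ℕ → ℕ → ℕ
  | [], _ => 0
  | a :: t, n => (if n % 2 = 1 then a else 0) ^^^ comb t (n / 2)

/-- encode a list of `ZMod 2` coefficients as a natural number (little endian). -/
def encodeL : List (ZMod 2) → ℕ
  | [] => 0
  | a :: t => a.val + 2 * encodeL t

lemma encodeL_lt : ∀ l : List (ZMod 2), encodeL l < 2 ^ l.length := by
  intro l
  induction l with
  | nil => simp [encodeL]
  | cons a t ih =>
      have : a.val < 2 := a.isLt
      simp only [encodeL, List.length_cons, pow_succ]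
      omega

lemma zmod2_cases (a : ZMod 2) : a = 0 ∨ a = 1 := by revert a; decide

lemma sum_eq_bitv (c : Fin 12 → ZMod 2) (l : List (Fin 12)) :
    (l.map fun i => c i • bitv (masks i)).sum
      = bitv (comb (l.map masks) (encodeL (l.map c))) := by
  induction l with
  | nil => simp [comb, bitv_zero]
  | cons i t ih =>
      simp only [List.map_cons, List.sum_cons, ih, comb, encodeL]
      rcases zmod2_cases (c i) with h | h
      · have hv : (c i).val = 0 := by rw [h]; rfl
        have h2 : (0 + 2 * encodeL (t.map c)) % 2 = 0 := by omega
        have h3 : (0 + 2 * encodeL (t.map c)) / 2 = encodeL (t.map c) := by omega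
        simp only [hv, h2, h3, h, zero_smul, zero_add]
        norm_num
      · have hv : (c i).val = 1 := by rw [h]; rfl
        have h2 : (1 + 2 * encodeL (t.map c)) % 2 = 1 := by omega
        have h3 : (1 + 2 * encodeL (t.map c)) / 2 = encodeL (t.map c) := by omega
        simp only [h, show ZMod.val (1 : ZMod 2) = 1 from rfl, h2, h3, one_smul, if_pos rfl]
        exact bitv_xor _ _

/-- popcount of the low `k` bits. -/
def popgo : ℕ → ℕ → ℕ
  | 0, _ => 0
  | k + 1, m => m % 2 + popgo k (m / 2)

def popcnt (m : ℕ) : ℕ := popgo 24 m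

lemma popgo_eq (k : ℕ) : ∀ m, popgo k m = ∑ j ∈ Finset.range k, (m >>> j) % 2 := by
  induction k with
  | zero => intro m; simp [popgo]
  | succ k ih =>
      intro m
      rw [popgo, ih (m / 2), Finset.sum_range_succ']
      have hs : ∀ j, ((m / 2) >>> j) = m >>> (j + 1) := by
        intro j
        rw [← Nat.shiftRight_one, ← Nat.shiftRight_add, Nat.add_comm]
      simp only [hs, Nat.shiftRight_zero]
      omega

lemma weight_bitv (m : ℕ) : weight (bitv m) = popcnt m := by
  rw [weight, Finset.card_filter, popcnt, popgo_eq, ← Fin.sum_univ_eq_sum_range]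
  refine Finset.sum_congr rfl fun j _ => ?_
  simp only [bitv]
  have ht : m.testBit (j : ℕ) = decide (m / 2 ^ (j : ℕ) % 2 = 1) := Nat.testBit_eq_decide_div_mod_eq
  have hsr : m >>> (j : ℕ) = m / 2 ^ (j : ℕ) := Nat.shiftRight_eq_div_pow m (j : ℕ)
  rcases Nat.mod_two_eq_zero_or_one (m / 2 ^ (j : ℕ)) with h | h <;>
    simp [ht, hsr, h]

set_option maxHeartbeats 4000000 in
set_option maxRecDepth 20000 in
lemma key : ∀ n < 256, ∀ r < 16,
    popcnt (comb masksL (256 * r + n)) ∈ ({0, 8, 12, 16, 24} : Finset ℕ) := by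
  decide

lemma code_weight : ∀ w ∈ golayCode, weight w ∈ ({0, 8, 12, 16, 24} : Finset ℕ) := by
  intro w hw
  rw [golayCode, Submodule.mem_span_range_iff_exists_fun] at hw
  obtain ⟨c, hc⟩ := hw
  set n := encodeL ((List.finRange 12).map c) with hn
  have hlt : n < 4096 := by
    have := encodeL_lt ((List.finRange 12).map c)
    simpa using this
  have hweq : w = bitv (comb masksL n) := by
    rw [← hc]
    have h1 : ∑ i, c i • indic (golayBasisSets i) = ∑ i, c i • bitv (masks i) := by
      refine Finset.sum_congr rfl fun i _ => by rw [indic_eq_bitv]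
    rw [h1, Fin.sum_univ_def, sum_eq_bitv, masksL_eq]
  have hsplit : 256 * (n / 256) + n % 256 = n := by omega
  have := key (n % 256) (by omega) (n / 256) (by omega)
  rw [hsplit] at this
  rw [hweq, weight_bitv]
  exact this

lemma weight_zero_iff (w : Fin 24 → ZMod 2) : weight w = 0 → w = 0 := by
  intro h
  rw [weight, Finset.card_eq_zero, Finset.filter_eq_empty_iff] at h
  funext j
  have := h (Finset.mem_univ j)
  simpa using this

/-- Any two distinct octads (weight-8 codewords) of the extended binary Golay code
intersect in exactly 0, 2 or 4 coordinates. -/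
theorem octad_intersections :
    ∀ u ∈ golayCode, ∀ v ∈ golayCode, u ≠ v → weight u = 8 → weight v = 8 →
      (Finset.univ.filter fun i => u i ≠ 0 ∧ v i ≠ 0).card ∈ ({0, 2, 4} : Set ℕ) := by
  intro u hu v hv huv hu8 hv8
  set A := Finset.univ.filter fun i => u i ≠ 0 with hA
  set B := Finset.univ.filter fun i => v i ≠ 0 with hB
  have hwmem : u + v ∈ golayCode := add_mem hu hv
  have hwne : u + v ≠ 0 := by
    intro h
    apply huv
    funext j
    have hj : u j + v j = 0 := congrFun h j
    rcases zmod2_cases (u j) with h1 | h1 <;> rcases zmod2_cases (v j) with h2 | h2 <;>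
      simp [h1, h2] at hj ⊢ <;> simp [h1, h2] at hj
  have hwspec := code_weight (u + v) hwmem
  have hwnz : weight (u + v) ≠ 0 := fun h => hwne (weight_zero_iff _ h)
  have hsd : (Finset.univ.filter fun i => (u + v) i ≠ 0) = (A ∪ B) \ (A ∩ B) := by
    ext j
    simp only [Finset.mem_filter, Finset.mem_sdiff, Finset.mem_union, Finset.mem_inter,
      Finset.mem_univ, true_and, hA, hB, Pi.add_apply]
    rcases zmod2_cases (u j) with h1 | h1 <;> rcases zmod2_cases (v j) with h2 | h2 <;>
      simp [h1, h2] <;> decide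
  have hI : (Finset.univ.filter fun i => u i ≠ 0 ∧ v i ≠ 0) = A ∩ B := by
    ext j
    simp [hA, hB]
  have hsub : A ∩ B ⊆ A ∪ B := (Finset.inter_subset_left).trans Finset.subset_union_left
  have h1 : ((A ∪ B) \ (A ∩ B)).card + (A ∩ B).card = (A ∪ B).card :=
    Finset.card_sdiff_add_card_eq_card hsub
  have h2 : (A ∪ B).card + (A ∩ B).card = A.card + B.card :=
    Finset.card_union_add_card_inter A B
  have hAc : A.card = 8 := hu8
  have hBc : B.card = 8 := hv8
  have hw : weight (u + v) = ((A ∪ B) \ (A ∩ B)).card := by rw [weight, hsd]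
  rw [hI]
  simp only [Finset.mem_insert, Finset.mem_singleton] at hwspec
  simp only [Set.mem_insert_iff, Set.mem_singleton_iff]
  omega
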